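/- (Validity of the tree symmetry-breaking inequalities.) In an instance of the tree BPCCSP admitting at least one feasible tree, there exists an optimal tree T* with the following property: for every three distinct visited vertices v, w, k ∈ V(T*) such that the three edges {v, w}, {v, k}, {w, k} all belong to E and ℓ({v, w}) > ℓ({v, k}) and ℓ({v, w}) > ℓ({w, k}), the edge {v, w} does not belong to T*. -/

import Mathlib

variable {V : Type*} [Fintype V] [DecidableEq V]

/-- The set of endpoints of the edges of an edge set `T` (the vertices "visited" by `T`). -/
def edgeVerts (T : Finset (Sym2 V)) : Finset V :=
  Finset.univ.filter (fun v => ∃ e ∈ T, v ∈ e)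

/-- Two vertices are connected in an edge set `T` if there is a path between them
using only edges of `T`. -/
def ConnIn (T : Finset (Sym2 V)) (u w : V) : Prop :=
  (SimpleGraph.fromEdgeSet (↑T : Set (Sym2 V))).Reachable u w

/-- A tree subgraph of `G` is a nonempty edge set `T ⊆ E(G)` whose induced subgraph is
connected and acyclic. -/
def IsTreeSubgraph (G : SimpleGraph V) (T : Finset (Sym2 V)) : Prop :=
  (↑T : Set (Sym2 V)) ⊆ G.edgeSet ∧ T.Nonempty ∧
  (∀ u ∈ edgeVerts T, ∀ w ∈ edgeVerts T, ConnIn T u w) ∧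
  (SimpleGraph.fromEdgeSet (↑T : Set (Sym2 V))).IsAcyclic
lemma mem_edgeVerts_iff {T : Finset (Sym2 V)} {v : V} :
    v ∈ edgeVerts T ↔ ∃ e ∈ T, v ∈ e := by
  simp [edgeVerts]

lemma erase_graph_eq {T : Finset (Sym2 V)} {e : Sym2 V} :
    SimpleGraph.fromEdgeSet (↑(T.erase e) : Set (Sym2 V)) =
      SimpleGraph.fromEdgeSet (↑T : Set (Sym2 V)) \ SimpleGraph.fromEdgeSet {e} := by
  ext a b
  simp only [SimpleGraph.fromEdgeSet_adj, SimpleGraph.sdiff_adj, Finset.coe_erase,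
    Set.mem_diff, Set.mem_singleton_iff, Finset.mem_coe, Finset.mem_erase]
  tauto

lemma reachable_erase_split {T : Finset (Sym2 V)} {v w a : V}
    (hr : ConnIn T a v) :
    ConnIn (T.erase s(v, w)) a v ∨ ConnIn (T.erase s(v, w)) a w := by
  rw [ConnIn, SimpleGraph.reachable_iff_reflTransGen] at hr
  induction hr using Relation.ReflTransGen.head_induction_on with
  | refl => exact Or.inl (SimpleGraph.Reachable.refl _)
  | head hadj _ ih =>
    rename_i b c _
    rw [SimpleGraph.fromEdgeSet_adj] at hadj
    by_cases hbc : s(b, c) = s(v, w)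
    · rw [Sym2.eq_iff] at hbc
      rcases hbc with ⟨rfl, rfl⟩ | ⟨rfl, rfl⟩
      · exact Or.inl (SimpleGraph.Reachable.refl _)
      · exact Or.inr (SimpleGraph.Reachable.refl _)
    · have hadj' : (SimpleGraph.fromEdgeSet (↑(T.erase s(v, w)) : Set (Sym2 V))).Adj b c := by
        rw [SimpleGraph.fromEdgeSet_adj]
        exact ⟨Finset.mem_coe.mpr (Finset.mem_erase.mpr ⟨hbc, hadj.1⟩), hadj.2⟩
      rcases ih with h | h
      · exact Or.inl (hadj'.reachable.trans h)
      · exact Or.inr (hadj'.reachable.trans h)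

lemma swap_lemma (G : SimpleGraph V) {T : Finset (Sym2 V)} {v w k : V}
    (hT : IsTreeSubgraph G T) (he : s(v, w) ∈ T) (hvw : v ≠ w) (hvk : v ≠ k) (hwk : w ≠ k)
    (hkT : k ∈ edgeVerts T) (hGf : s(v, k) ∈ G.edgeSet)
    (hkw : ConnIn (T.erase s(v, w)) k w) :
    IsTreeSubgraph G (insert s(v, k) (T.erase s(v, w))) ∧
      edgeVerts (insert s(v, k) (T.erase s(v, w))) = edgeVerts T ∧
      s(v, k) ∉ T.erase s(v, w) := by
  classical
  set e := s(v, w) with hedef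
  set f := s(v, k) with hfdef
  set T' := insert f (T.erase e) with hT'def
  have hkw' : (SimpleGraph.fromEdgeSet (↑(T.erase e) : Set (Sym2 V))).Reachable k w := hkw
  -- bridge: v and w not reachable in T.erase e
  have hAdjvw : (SimpleGraph.fromEdgeSet (↑T : Set (Sym2 V))).Adj v w := by
    rw [SimpleGraph.fromEdgeSet_adj]; exact ⟨by simpa using he, hvw⟩
  have hbr : ¬ (SimpleGraph.fromEdgeSet (↑(T.erase e) : Set (Sym2 V))).Reachable v w := by
    have := (SimpleGraph.isAcyclic_iff_forall_adj_isBridge.mp hT.2.2.2) hAdjvw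
    rw [SimpleGraph.isBridge_iff] at this
    rw [erase_graph_eq]
    exact this
  have hvknr : ¬ (SimpleGraph.fromEdgeSet (↑(T.erase e) : Set (Sym2 V))).Reachable v k :=
    fun h => hbr (h.trans hkw')
  have hfnotin : f ∉ T.erase e := by
    intro hmem
    exact hvknr (SimpleGraph.Adj.reachable (by
      rw [SimpleGraph.fromEdgeSet_adj]; exact ⟨Finset.mem_coe.mpr hmem, hvk⟩))
  have hle : SimpleGraph.fromEdgeSet (↑(T.erase e) : Set (Sym2 V)) ≤
      SimpleGraph.fromEdgeSet (↑T' : Set (Sym2 V)) := by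
    apply SimpleGraph.fromEdgeSet_mono
    intro x hx
    exact Finset.mem_coe.mpr (Finset.mem_insert_of_mem (Finset.mem_coe.mp hx))
  have hAdjvk : (SimpleGraph.fromEdgeSet (↑T' : Set (Sym2 V))).Adj v k := by
    rw [SimpleGraph.fromEdgeSet_adj]
    exact ⟨by simp [hT'def, hfdef], hvk⟩
  have hvwreach : (SimpleGraph.fromEdgeSet (↑T' : Set (Sym2 V))).Reachable v w :=
    hAdjvk.reachable.trans ((hkw'.mono hle))
  -- transfer of reachability from T to T'
  have htrans : ∀ a b : V, ConnIn T a b →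
      (SimpleGraph.fromEdgeSet (↑T' : Set (Sym2 V))).Reachable a b := by
    intro a b hr
    rw [ConnIn, SimpleGraph.reachable_iff_reflTransGen] at hr
    induction hr using Relation.ReflTransGen.head_induction_on with
    | refl => exact SimpleGraph.Reachable.refl _
    | head hadj _ ih =>
      rename_i x y _
      rw [SimpleGraph.fromEdgeSet_adj] at hadj
      by_cases hxy : s(x, y) = e
      · rw [hedef, Sym2.eq_iff] at hxy
        rcases hxy with ⟨rfl, rfl⟩ | ⟨rfl, rfl⟩
        · exact hvwreach.trans ih
        · exact hvwreach.symm.trans ih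
      · have : (SimpleGraph.fromEdgeSet (↑T' : Set (Sym2 V))).Adj x y := by
          rw [SimpleGraph.fromEdgeSet_adj]
          refine ⟨?_, hadj.2⟩
          simp only [hT'def, Finset.coe_insert, Set.mem_insert_iff, Finset.mem_coe,
            Finset.mem_erase]
          exact Or.inr ⟨hxy, by simpa using hadj.1⟩
        exact this.reachable.trans ih
  -- w has an incident edge in T.erase e
  have hwedge : ∃ g ∈ T.erase e, w ∈ g := by
    have := hkw'.symm
    rw [SimpleGraph.reachable_iff_reflTransGen] at this
    rcases Relation.ReflTransGen.cases_head this with h | ⟨b, hadj, _⟩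
    · exact absurd h hwk
    · rw [SimpleGraph.fromEdgeSet_adj] at hadj
      exact ⟨s(w, b), Finset.mem_coe.mp hadj.1, by simp⟩
  -- edgeVerts equality
  have hverts : edgeVerts T' = edgeVerts T := by
    ext x
    rw [mem_edgeVerts_iff, mem_edgeVerts_iff]
    constructor
    · rintro ⟨g, hg, hx⟩
      rcases Finset.mem_insert.mp hg with rfl | hg
      · rcases Sym2.mem_iff.mp hx with rfl | rfl
        · exact ⟨e, he, by simp [hedef]⟩
        · exact mem_edgeVerts_iff.mp hkT
      · exact ⟨g, Finset.mem_of_mem_erase hg, hx⟩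
    · rintro ⟨g, hg, hx⟩
      by_cases hge : g = e
      · subst hge
        rcases Sym2.mem_iff.mp hx with rfl | rfl
        · exact ⟨f, Finset.mem_insert_self _ _, by simp [hfdef]⟩
        · obtain ⟨g', hg', hx'⟩ := hwedge
          exact ⟨g', Finset.mem_insert_of_mem hg', hx'⟩
      · exact ⟨g, Finset.mem_insert_of_mem (Finset.mem_erase.mpr ⟨hge, hg⟩), hx⟩
  -- acyclicity
  have hdel : SimpleGraph.fromEdgeSet (↑T' : Set (Sym2 V)) \ SimpleGraph.fromEdgeSet {f} =
      SimpleGraph.fromEdgeSet (↑(T.erase e) : Set (Sym2 V)) := by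
    ext a b
    simp only [SimpleGraph.sdiff_adj, SimpleGraph.fromEdgeSet_adj, hT'def, Finset.coe_insert,
      Set.mem_insert_iff, Finset.mem_coe, Set.mem_singleton_iff]
    have hsub : s(a, b) = f → s(a, b) ∉ T.erase e := fun h => h ▸ hfnotin
    tauto
  have hbridge : (SimpleGraph.fromEdgeSet (↑T' : Set (Sym2 V))).IsBridge f := by
    rw [hfdef, SimpleGraph.isBridge_iff]
    change ¬ (SimpleGraph.fromEdgeSet (↑T' : Set (Sym2 V)) \ SimpleGraph.fromEdgeSet {s(v, k)}).Reachable v k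
    rw [show SimpleGraph.fromEdgeSet (↑T' : Set (Sym2 V)) \ SimpleGraph.fromEdgeSet {s(v, k)} =
      SimpleGraph.fromEdgeSet (↑(T.erase e) : Set (Sym2 V)) from hdel]
    exact hvknr
  have hacyc : (SimpleGraph.fromEdgeSet (↑T' : Set (Sym2 V))).IsAcyclic := by
    intro u c hc
    have hfnot : f ∉ c.edges := by
      rw [hfdef, SimpleGraph.isBridge_iff_adj_and_forall_cycle_notMem hAdjvk] at hbridge
      exact hbridge c hc
    have hedges : ∀ g ∈ c.edges, g ∈ (SimpleGraph.fromEdgeSet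
        (↑(T.erase e) : Set (Sym2 V))).edgeSet := by
      intro g hg
      have hg' := c.edges_subset_edgeSet hg
      rw [SimpleGraph.edgeSet_fromEdgeSet] at hg' ⊢
      rcases hg' with ⟨hg1, hg2⟩
      refine ⟨?_, hg2⟩
      simp only [hT'def, Finset.coe_insert, Set.mem_insert_iff, Finset.mem_coe] at hg1
      rcases hg1 with rfl | hg1
      · exact absurd hg hfnot
      · exact Finset.mem_coe.mpr hg1
    have hc' := hc.transfer hedges
    have hle2 : SimpleGraph.fromEdgeSet (↑(T.erase e) : Set (Sym2 V)) ≤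
        SimpleGraph.fromEdgeSet (↑T : Set (Sym2 V)) :=
      SimpleGraph.fromEdgeSet_mono (by simpa using Finset.erase_subset e T)
    exact hT.2.2.2 _ (hc'.mapLe hle2)
  refine ⟨⟨?_, ⟨f, Finset.mem_insert_self _ _⟩, ?_, hacyc⟩, hverts, hfnotin⟩
  · intro x hx
    simp only [hT'def, Finset.coe_insert, Set.mem_insert_iff, Finset.mem_coe] at hx
    rcases hx with rfl | hx
    · exact hGf
    · exact hT.1 (by simpa using Finset.mem_of_mem_erase hx)
  · intro a ha b hb
    rw [hverts] at ha hb
    exact htrans a b (hT.2.2.1 a ha b hb)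

/-- An instance of a budgeted prize-collecting covering subgraph problem: a finite simple
graph with a depot, nonnegative edge costs, a positive budget, nonnegative vertex prizes,
neighbourhoods, nonnegative coverage prizes, and coverage capacities. -/
structure BPCCSPInstance (V : Type*) [Fintype V] [DecidableEq V] where
  G : SimpleGraph V
  depot : V
  len : Sym2 V → ℝ
  len_nonneg : ∀ e ∈ G.edgeSet, 0 ≤ len e
  budget : ℝ
  budget_pos : 0 < budget
  prize : V → ℝ
  prize_nonneg : ∀ v, 0 ≤ prize v
  nbhd : V → Finset V
  nbhd_not_self : ∀ v, v ∉ nbhd v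
  covPrize : V → V → ℝ
  covPrize_nonneg : ∀ v w, 0 ≤ covPrize v w
  cap : V → ℕ

/-- A coverage assignment for a visited set `S`: a partial map `σ` from `V ∖ S` to `S`
such that `σ v ∈ N_v ∩ S` whenever defined, and every `w ∈ S` has at most `c_w` preimages. -/
def IsCoverAssign (I : BPCCSPInstance V) (S : Finset V) (σ : V → Option V) : Prop :=
  (∀ v w, σ v = some w → v ∉ S ∧ w ∈ S ∧ w ∈ I.nbhd v) ∧
  (∀ w ∈ S, (Finset.univ.filter (fun v => σ v = some w)).card ≤ I.cap w)

/-- The value of a coverage assignment: the sum of `q_{v, σ(v)}` over all `v` where `σ` is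
defined. -/
def assignValue (I : BPCCSPInstance V) (σ : V → Option V) : ℝ :=
  ∑ v, Option.elim (σ v) 0 (fun w => I.covPrize v w)

/-- The collected prize of a visited set `S`: the sum of the prizes of the vertices of
`S ∖ {depot}` plus the maximum value of a coverage assignment for `S`. -/
noncomputable def collectedPrize (I : BPCCSPInstance V) (S : Finset V) : ℝ :=
  (∑ v ∈ S.erase I.depot, I.prize v) +
    sSup {x : ℝ | ∃ σ, IsCoverAssign I S σ ∧ x = assignValue I σ}

/-- A tree is feasible if it visits the depot and its cost does not exceed the budget. -/
def IsFeasibleTree (I : BPCCSPInstance V) (T : Finset (Sym2 V)) : Prop :=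
  IsTreeSubgraph I.G T ∧ I.depot ∈ edgeVerts T ∧ (∑ e ∈ T, I.len e) ≤ I.budget

/-- A tree is optimal if it is feasible and its collected prize is maximal among all
feasible trees. -/
def IsOptimalTree (I : BPCCSPInstance V) (T : Finset (Sym2 V)) : Prop :=
  IsFeasibleTree I T ∧
    ∀ T' : Finset (Sym2 V), IsFeasibleTree I T' →
      collectedPrize I (edgeVerts T') ≤ collectedPrize I (edgeVerts T)

/-- Validity of the tree symmetry-breaking inequalities: if some feasible tree exists,
there is an optimal tree T* such that for every three distinct visited vertices v, w, k
forming a triangle in G with {v, w} strictly most expensive, the edge {v, w} is not in T*. -/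
theorem tree_bpccsp_symmetry_breaking_valid
    (I : BPCCSPInstance V) (hfeas : ∃ T : Finset (Sym2 V), IsFeasibleTree I T) :
    ∃ T' : Finset (Sym2 V), IsOptimalTree I T' ∧
      ∀ v w k : V, v ≠ w → v ≠ k → w ≠ k →
        v ∈ edgeVerts T' → w ∈ edgeVerts T' → k ∈ edgeVerts T' →
        s(v, w) ∈ I.G.edgeSet → s(v, k) ∈ I.G.edgeSet → s(w, k) ∈ I.G.edgeSet →
        I.len s(v, k) < I.len s(v, w) → I.len s(w, k) < I.len s(v, w) →
        s(v, w) ∉ T' := by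
  classical
  obtain ⟨T0, hT0⟩ := hfeas
  have hFne : (Finset.univ.filter (fun T => IsFeasibleTree I T) :
      Finset (Finset (Sym2 V))).Nonempty := ⟨T0, by simp [hT0]⟩
  obtain ⟨Tm, hTmF, hTmMax⟩ :=
    Finset.exists_max_image _ (fun T => collectedPrize I (edgeVerts T)) hFne
  have hTmFeas : IsFeasibleTree I Tm := (Finset.mem_filter.mp hTmF).2
  have hTmOpt : IsOptimalTree I Tm :=
    ⟨hTmFeas, fun T' hT' => hTmMax T' (by simp [hT'])⟩
  have hF'ne : (Finset.univ.filter (fun T => IsOptimalTree I T) :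
      Finset (Finset (Sym2 V))).Nonempty := ⟨Tm, by simp [hTmOpt]⟩
  obtain ⟨Ts, hTsF', hTsMin⟩ :=
    Finset.exists_min_image _ (fun T => ∑ e ∈ T, I.len e) hF'ne
  have hTsOpt : IsOptimalTree I Ts := (Finset.mem_filter.mp hTsF').2
  refine ⟨Ts, hTsOpt, ?_⟩
  intro v w k hvw hvk hwk hv hw hk hGvw hGvk hGwk hlvk hlwk hmem
  have hconn : ConnIn Ts k v := hTsOpt.1.1.2.2.1 k hk v hv
  have hkey : ∀ (v' w' : V), v' ≠ w' → v' ≠ k → w' ≠ k → s(v', w') ∈ Ts →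
      s(v', k) ∈ I.G.edgeSet → I.len s(v', k) < I.len s(v', w') →
      ConnIn (Ts.erase s(v', w')) k w' → False := by
    intro v' w' hvw' hvk' hwk' hmem' hG' hlen' hkw'
    obtain ⟨htree, hverts, hfnot⟩ :=
      swap_lemma I.G hTsOpt.1.1 hmem' hvw' hvk' hwk' hk hG' hkw'
    set T' := insert s(v', k) (Ts.erase s(v', w')) with hT'def
    have hsum : ∑ g ∈ T', I.len g = I.len s(v', k) + ∑ g ∈ Ts.erase s(v', w'), I.len g :=
      Finset.sum_insert hfnot
    have hsumerase :
        I.len s(v', w') + ∑ g ∈ Ts.erase s(v', w'), I.len g = ∑ g ∈ Ts, I.len g :=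
      Finset.add_sum_erase _ _ hmem'
    have hlt : ∑ g ∈ T', I.len g < ∑ g ∈ Ts, I.len g := by linarith
    have hfeas' : IsFeasibleTree I T' :=
      ⟨htree, by rw [hverts]; exact hTsOpt.1.2.1, le_trans hlt.le hTsOpt.1.2.2⟩
    have hopt' : IsOptimalTree I T' := by
      refine ⟨hfeas', fun T'' hT'' => ?_⟩
      rw [hverts]
      exact hTsOpt.2 T'' hT''
    have := hTsMin T' (by simp [hopt'])
    linarith
  rcases reachable_erase_split (w := w) hconn with hcase | hcase
  · have hmem' : s(w, v) ∈ Ts := by rwa [Sym2.eq_swap]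
    have hcase' : ConnIn (Ts.erase s(w, v)) k v := by rwa [Sym2.eq_swap]
    exact hkey w v (Ne.symm hvw) hwk hvk hmem' hGwk
      (by rwa [Sym2.eq_swap (a := w) (b := v)]) hcase'
  · exact hkey v w hvw hvk hwk hmem hGvk hlvk hcase
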